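/- A continuous function f : T → X on the quantum time scale is almost automorphic (in the sense of Definition: subsequential limits via multiplicative shifts t ↦ t·q^{s_n}) if and only if the function f̃ : ℤ ∪ {−∞} → X defined by f̃(n) = f(q^n) for n ∈ ℤ and f̃(−∞) = f(0) is almost automorphic in the discrete sense, where shifts act by n + s on ℤ and fix −∞. -/

import Mathlib

open Filter Topology

/-- The quantum time scale `{q^n : n ∈ ℤ} ∪ {0}` as a subset of `ℝ`. -/
def qT (q : ℝ) : Set ℝ := {t | (∃ n : ℤ, t = q ^ n) ∨ t = 0}

/-- Almost automorphy on the quantum time scale. -/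
def QAA {X : Type*} [NormedAddCommGroup X] (q : ℝ) (f : ℝ → X) : Prop :=
  ∀ s : ℕ → ℤ, ∃ φ : ℕ → ℕ, StrictMono φ ∧ ∃ g : ℝ → X,
    (∀ t ∈ qT q, Tendsto (fun n => f (t * q ^ (s (φ n)))) atTop (𝓝 (g t))) ∧
    (∀ t ∈ qT q, Tendsto (fun n => g (t * q ^ (-(s (φ n))))) atTop (𝓝 (f t)))

/-- Discrete almost automorphy on the generalized integers `ℤ ∪ {−∞}` (modelled as
`WithBot ℤ`), where shifts act by addition on `ℤ` and fix `−∞` (note `⊥ + c = ⊥`). -/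
def DAA {X : Type*} [NormedAddCommGroup X] (F : WithBot ℤ → X) : Prop :=
  ∀ s : ℕ → ℤ, ∃ φ : ℕ → ℕ, StrictMono φ ∧ ∃ G : WithBot ℤ → X,
    (∀ m : WithBot ℤ, Tendsto (fun n => F (m + ((s (φ n) : ℤ) : WithBot ℤ))) atTop (𝓝 (G m))) ∧
    (∀ m : WithBot ℤ, Tendsto (fun n => G (m + ((-(s (φ n)) : ℤ) : WithBot ℤ))) atTop (𝓝 (F m)))

lemma zpow_inj_of_one_lt {q : ℝ} (hq : 1 < q) {n m : ℤ} (h : q ^ n = q ^ m) : n = m := by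
  have hlog : Real.log q ≠ 0 := ne_of_gt (Real.log_pos hq)
  have := congrArg Real.log h
  rw [Real.log_zpow, Real.log_zpow] at this
  exact_mod_cast mul_right_cancel₀ hlog this

theorem qaa_iff_daa {X : Type*} [NormedAddCommGroup X] [NormedSpace ℝ X] [CompleteSpace X]
    (q : ℝ) (hq : 1 < q) (f : ℝ → X)
    (hcont : Tendsto (fun m : ℕ => f ((q : ℝ) ^ (-(m : ℤ)))) atTop (𝓝 (f 0))) :
    QAA q f ↔ DAA (fun m : WithBot ℤ => (WithBot.recBotCoe (f 0) (fun n : ℤ => f (q ^ n)) m : X)) := by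
  have hq0 : (0 : ℝ) < q := lt_trans one_pos hq
  have hqne : q ≠ 0 := ne_of_gt hq0
  constructor
  · intro hf s
    obtain ⟨φ, hφ, g, h1, h2⟩ := hf s
    have hg0 : g 0 = f 0 := by
      have := h1 0 (Or.inr rfl)
      simp only [zero_mul] at this
      exact tendsto_nhds_unique this tendsto_const_nhds
    refine ⟨φ, hφ, fun m => WithBot.recBotCoe (g 0) (fun n : ℤ => g (q ^ n)) m, ?_, ?_⟩
    · intro m
      induction m using WithBot.recBotCoe with
      | bot => simp [hg0]
      | coe k =>
        have := h1 (q ^ k) (Or.inl ⟨k, rfl⟩)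
        simp only [← zpow_add₀ hqne] at this
        simpa [← WithBot.coe_add] using this
    · intro m
      induction m using WithBot.recBotCoe with
      | bot => simp [hg0]
      | coe k =>
        have := h2 (q ^ k) (Or.inl ⟨k, rfl⟩)
        simp only [← zpow_add₀ hqne] at this
        simpa [← WithBot.coe_add] using this
  · intro hF s
    obtain ⟨φ, hφ, G, h1, h2⟩ := hF s
    have hG0 : G ⊥ = f 0 := by
      have := h1 ⊥
      simp only [WithBot.bot_add] at this
      exact (tendsto_nhds_unique tendsto_const_nhds this).symm
    classical
    refine ⟨φ, hφ, fun t => if h : ∃ n : ℤ, t = q ^ n then G (h.choose : ℤ) else G ⊥, ?_, ?_⟩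
    · intro t ht
      rcases ht with ⟨k, rfl⟩ | rfl
      · have hk : ∃ n : ℤ, q ^ k = q ^ n := ⟨k, rfl⟩
        have hkc : hk.choose = k := (zpow_inj_of_one_lt hq hk.choose_spec).symm
        simp only [dif_pos hk, hkc]
        have := h1 (k : WithBot ℤ)
        simp only [← WithBot.coe_add] at this
        simpa [← zpow_add₀ hqne] using
          (show Tendsto (fun n => f (q ^ (k + s (φ n)))) atTop (𝓝 (G (k : WithBot ℤ))) from this)
      · have h0 : ¬ ∃ n : ℤ, (0 : ℝ) = q ^ n := by
          rintro ⟨n, hn⟩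
          exact (zpow_ne_zero n hqne) hn.symm
        simp only [zero_mul, dif_neg h0, hG0]
        exact tendsto_const_nhds
    · intro t ht
      rcases ht with ⟨k, rfl⟩ | rfl
      · have key : ∀ n : ℕ, (fun n => if h : ∃ m : ℤ, q ^ k * q ^ (-(s (φ n))) = q ^ m
              then G (h.choose : ℤ) else G ⊥) n = G ((k : WithBot ℤ) + ((-(s (φ n)) : ℤ) : WithBot ℤ)) := by
          intro n
          have hk : ∃ m : ℤ, q ^ k * q ^ (-(s (φ n))) = q ^ m :=
            ⟨k + (-(s (φ n))), (zpow_add₀ hqne _ _).symm⟩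
          have hkc : hk.choose = k + (-(s (φ n))) :=
            zpow_inj_of_one_lt hq
              (hk.choose_spec.symm.trans (zpow_add₀ hqne k (-(s (φ n)))).symm)
          simp only [dif_pos hk, hkc, ← WithBot.coe_add]
        have := h2 (k : WithBot ℤ)
        simpa only [key] using
          (show Tendsto (fun n => G ((k : WithBot ℤ) + ((-(s (φ n)) : ℤ) : WithBot ℤ))) atTop
            (𝓝 (f (q ^ k))) from this)
      · have h0 : ∀ n : ℕ, ¬ ∃ m : ℤ, (0 : ℝ) * q ^ (-(s (φ n))) = q ^ m := by
          rintro n ⟨m, hm⟩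
          rw [zero_mul] at hm
          exact (zpow_ne_zero m hqne) hm.symm
        have heq : (fun n : ℕ => (if h : ∃ m : ℤ, (0:ℝ) * q ^ (-(s (φ n))) = q ^ m
            then G (h.choose : ℤ) else G ⊥)) = fun _ => G ⊥ :=
          funext fun n => dif_neg (h0 n)
        rw [heq, hG0]
        exact tendsto_const_nhds
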